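/- (Plotkin-like bound) Let C be an [n,k] linear code over F_p, where p is an odd prime. Then for every 1 ≤ r ≤ k, d_r(C) ≤ ⌊ n(p^r − 1)p^{k−r} / (p^k − 1) ⌋. -/

import Mathlib

open scoped Classical

/-- The `r`-th generalized Hamming weight of a linear code `C ⊆ F_p^ι`:
the minimum cardinality of the support of an `r`-dimensional subcode of `C`.
The support of a subcode `U` is the set of coordinates `i` such that `x i ≠ 0`
for some `x ∈ U`. -/
noncomputable def ghw {ι : Type*} [Fintype ι] (p : ℕ)
    (C : Submodule (ZMod p) (ι → ZMod p)) (r : ℕ) : ℕ :=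
  sInf {w : ℕ | ∃ U : Submodule (ZMod p) (ι → ZMod p), U ≤ C ∧
    Module.finrank (ZMod p) U = r ∧
    (Finset.univ.filter fun i : ι => ∃ x ∈ U, x i ≠ 0).card = w}

/-- Plotkin-like bound: for an `[n,k]` linear code `C` over `F_p`
and `1 ≤ r ≤ k`, we have `d_r(C) ≤ ⌊n (p^r - 1) p^{k-r} / (p^k - 1)⌋`. -/
lemma pow_sub_pow_eq (p b c : ℕ) (h : c ≤ b) :
    p ^ b - p ^ c = p ^ c * (p ^ (b - c) - 1) := by
  rw [Nat.mul_sub, mul_one, ← pow_add, Nat.add_sub_cancel' h]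

lemma prod_key (p k : ℕ) : ∀ r, r ≤ k →
    (∏ j ∈ Finset.range r, (p ^ (k - 1) - p ^ j)) * (p ^ k - 1) =
      (∏ j ∈ Finset.range r, (p ^ k - p ^ j)) * (p ^ (k - r) - 1) := by
  intro r
  induction r with
  | zero => simp
  | succ r ih =>
    intro h
    have hr : r ≤ k := Nat.le_of_succ_le h
    rw [Finset.prod_range_succ, Finset.prod_range_succ, mul_right_comm, ih hr,
      pow_sub_pow_eq p (k-1) r (by omega), pow_sub_pow_eq p k r (by omega)]
    have h1 : k - 1 - r = k - (r + 1) := by omega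
    have h2 : k - r = k - (r + 1) + 1 := by omega
    rw [h1, h2]
    generalize (∏ j ∈ Finset.range r, (p ^ k - p ^ j)) = A
    generalize (p ^ (k - (r+1)) - 1) = x
    generalize (p ^ (k - (r+1) + 1) - 1) = y
    ring

lemma div_cross (n a b c d : ℕ) (hb : 0 < b) (hd : 0 < d) (h : a * d = c * b) :
    n * a / b = n * c / d := by
  rw [← Nat.mul_div_mul_right (n*a) b hd, mul_assoc, h, ← mul_assoc,
    ← Nat.mul_div_mul_right (n*c) d hb, mul_comm b d]

lemma lt_mul_div_succ (a b : ℕ) (hb : 0 < b) : a < b * (a / b + 1) :=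
  calc a = b * (a / b) + a % b := (Nat.div_add_mod a b).symm
    _ < b * (a / b) + b := Nat.add_lt_add_left (Nat.mod_lt a hb) _
    _ = b * (a / b + 1) := by ring

lemma filter_card_ge (p k r : ℕ) [Fact p.Prime] (hr : r ≤ k)
    (V : Type*) [AddCommGroup V] [Module (ZMod p) V] [Finite V]
    [Fintype { s : Fin r → V // LinearIndependent (ZMod p) s }]
    (hV : Module.finrank (ZMod p) V = k) (φ : V →ₗ[ZMod p] ZMod p) :
    (∏ j ∈ Finset.range r, (p ^ (k - 1) - p ^ j)) ≤
      (Finset.univ.filter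
        (fun s : { s : Fin r → V // LinearIndependent (ZMod p) s } =>
          ∀ j, φ (s.1 j) = 0)).card := by
  haveI : Fintype (ZMod p) := by infer_instance
  haveI : Finite (LinearMap.ker φ) := Subtype.finite
  have hd : k - 1 ≤ Module.finrank (ZMod p) (LinearMap.ker φ) := by
    have h1 := LinearMap.finrank_range_add_finrank_ker φ
    rw [hV] at h1
    have h2 : Module.finrank (ZMod p) (LinearMap.range φ) ≤ 1 := by
      simpa using Submodule.finrank_le (LinearMap.range φ)
    omega
  by_cases hrd : r ≤ Module.finrank (ZMod p) (LinearMap.ker φ)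
  · haveI : Fintype { s : Fin r → (LinearMap.ker φ) // LinearIndependent (ZMod p) s } :=
      Fintype.ofFinite _
    have hcard : Nat.card { s : Fin r → (LinearMap.ker φ) // LinearIndependent (ZMod p) s } =
        ∏ j : Fin r, (p ^ Module.finrank (ZMod p) (LinearMap.ker φ) - p ^ (j : ℕ)) := by
      rw [card_linearIndependent hrd, ZMod.card]
    have hle : (∏ j ∈ Finset.range r, (p ^ (k - 1) - p ^ j)) ≤
        Nat.card { s : Fin r → (LinearMap.ker φ) // LinearIndependent (ZMod p) s } := by
      rw [hcard, ← Fin.prod_univ_eq_prod_range]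
      exact Finset.prod_le_prod' fun j _ => Nat.sub_le_sub_right
        (Nat.pow_le_pow_right (Fact.out : p.Prime).pos hd) _
    refine hle.trans ?_
    rw [Nat.card_eq_fintype_card, ← Finset.card_univ]
    refine Finset.card_le_card_of_injOn
      (fun t => ⟨fun j => (t.1 j : V), t.2.map' (LinearMap.ker φ).subtype (Submodule.ker_subtype _)⟩)
      (fun t _ => ?_) (fun t _ t' _ h => ?_)
    · simp only [Finset.coe_filter, Finset.mem_coe, Set.mem_setOf_eq, Finset.mem_filter, Finset.mem_univ, true_and]
      intro j
      exact (t.1 j).2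
    · ext j
      exact congrArg (fun f => f j) (congrArg Subtype.val h)
  · have hd' : Module.finrank (ZMod p) (LinearMap.ker φ) = k - 1 := by
      have := Submodule.finrank_le (LinearMap.ker φ)
      rw [hV] at this
      omega
    have hm : k - 1 ∈ Finset.range r := Finset.mem_range.mpr (by omega)
    calc (∏ j ∈ Finset.range r, (p ^ (k - 1) - p ^ j)) = 0 :=
          Finset.prod_eq_zero hm (by simp)
      _ ≤ _ := Nat.zero_le _

lemma ghw_le {ι : Type*} [Fintype ι] (p : ℕ)
    (C U : Submodule (ZMod p) (ι → ZMod p)) (r : ℕ) (hU : U ≤ C)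
    (hr : Module.finrank (ZMod p) U = r) :
    ghw p C r ≤ (Finset.univ.filter fun i : ι => ∃ x ∈ U, x i ≠ 0).card :=
  Nat.sInf_le ⟨U, hU, hr, rfl⟩

set_option maxHeartbeats 2000000 in
theorem plotkin_like_bound (p n k : ℕ) (hp : p.Prime) (hodd : Odd p)
    (C : Submodule (ZMod p) (Fin n → ZMod p))
    (hk : Module.finrank (ZMod p) C = k)
    (r : ℕ) (hr1 : 1 ≤ r) (hr2 : r ≤ k) :
    ghw p C r ≤ n * (p ^ r - 1) * p ^ (k - r) / (p ^ k - 1) := by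
  haveI : Fact p.Prime := ⟨hp⟩
  haveI : Finite C := Subtype.finite
  haveI : Fintype C := Fintype.ofFinite _
  haveI hTf : Fintype { s : Fin r → C // LinearIndependent (ZMod p) s } :=
    Fintype.ofFinite _
  set N := ∏ j ∈ Finset.range r, (p ^ k - p ^ j) with hN
  set N' := ∏ j ∈ Finset.range r, (p ^ (k - 1) - p ^ j) with hN'
  have hp2 : 2 ≤ p := hp.two_le
  have hN0 : 0 < N := by
    refine Finset.prod_pos fun j hj => ?_
    have hj' : j < k := lt_of_lt_of_le (Finset.mem_range.mp hj) hr2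
    exact Nat.sub_pos_of_lt (Nat.pow_lt_pow_right (by omega) hj')
  have hcardT : Fintype.card { s : Fin r → C // LinearIndependent (ZMod p) s } = N := by
    rw [← Nat.card_eq_fintype_card, card_linearIndependent (by rw [hk]; exact hr2),
      hN, ← Fin.prod_univ_eq_prod_range]
    simp [hk, ZMod.card]
  -- the coordinate functionals
  set φ : Fin n → (C →ₗ[ZMod p] ZMod p) :=
    fun i => (LinearMap.proj i).comp C.subtype with hφ
  -- the weight of the span of a tuple
  have key : ∀ s : { s : Fin r → C // LinearIndependent (ZMod p) s },
      ghw p C r ≤ (Finset.univ.filter fun i : Fin n => ¬ ∀ j, φ i (s.1 j) = 0).card := by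
    intro s
    set U := Submodule.span (ZMod p) (Set.range fun j => ((s.1 j : Fin n → ZMod p))) with hU
    have hUle : U ≤ C := by
      rw [hU, Submodule.span_le]
      rintro - ⟨j, rfl⟩
      exact (s.1 j).2
    have hli : LinearIndependent (ZMod p) fun j => ((s.1 j : Fin n → ZMod p)) :=
      s.2.map' C.subtype (Submodule.ker_subtype C)
    have hUrank : Module.finrank (ZMod p) U = r := by
      rw [hU, finrank_span_eq_card hli, Fintype.card_fin]
    refine (ghw_le p C U r hUle hUrank).trans (Finset.card_le_card ?_)
    intro i hi
    simp only [Finset.mem_filter, Finset.mem_univ, true_and] at hi ⊢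
    obtain ⟨x, hxU, hxi⟩ := hi
    intro hall
    have hsub : U ≤ LinearMap.ker (LinearMap.proj (R := ZMod p)
        (φ := fun _ : Fin n => ZMod p) i) := by
      rw [hU, Submodule.span_le]
      rintro - ⟨j, rfl⟩
      simpa [hφ] using hall j
    exact hxi (hsub hxU)
  -- summing over all tuples
  have hsum : ∑ s : { s : Fin r → C // LinearIndependent (ZMod p) s },
      (Finset.univ.filter fun i : Fin n => ¬ ∀ j, φ i (s.1 j) = 0).card ≤ n * (N - N') := by
    have swap : ∑ s : { s : Fin r → C // LinearIndependent (ZMod p) s },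
        (Finset.univ.filter fun i : Fin n => ¬ ∀ j, φ i (s.1 j) = 0).card =
        ∑ i : Fin n, (Finset.univ.filter
          (fun s : { s : Fin r → C // LinearIndependent (ZMod p) s } =>
            ¬ ∀ j, φ i (s.1 j) = 0)).card := by
      simp only [Finset.card_filter]
      exact Finset.sum_comm
    rw [swap]
    have hper : ∀ i : Fin n, (Finset.univ.filter
        (fun s : { s : Fin r → C // LinearIndependent (ZMod p) s } =>
          ¬ ∀ j, φ i (s.1 j) = 0)).card ≤ N - N' := by
      intro i
      have h1 := filter_card_ge p k r hr2 C hk (φ i)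
      have h2 := Finset.card_filter_add_card_filter_not
        (s := (Finset.univ : Finset { s : Fin r → C // LinearIndependent (ZMod p) s }))
        (p := fun s => ∀ j, φ i (s.1 j) = 0)
      rw [Finset.card_univ, hcardT] at h2
      omega
    calc ∑ i : Fin n, (Finset.univ.filter
          (fun s : { s : Fin r → C // LinearIndependent (ZMod p) s } =>
            ¬ ∀ j, φ i (s.1 j) = 0)).card ≤ ∑ _i : Fin n, (N - N') :=
          Finset.sum_le_sum fun i _ => hper i
      _ = n * (N - N') := by simp [mul_comm]
  -- pigeonhole
  have hne : Nonempty { s : Fin r → C // LinearIndependent (ZMod p) s } := by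
    rw [← Fintype.card_pos_iff, hcardT]; exact hN0
  obtain ⟨s⟩ := hne
  by_contra hcon
  push_neg at hcon
  have hlb : ∀ t : { s : Fin r → C // LinearIndependent (ZMod p) s },
      n * (N - N') / N + 1 ≤
        (Finset.univ.filter fun i : Fin n => ¬ ∀ j, φ i (t.1 j) = 0).card := by
    intro t
    have h1 := key t
    have heq : n * (N - N') / N = n * (p ^ r - 1) * p ^ (k - r) / (p ^ k - 1) := by
      have hpk1 : 0 < p ^ k - 1 := by
        have : 2 ≤ p ^ k := le_trans hp2 (Nat.le_self_pow (by omega) p)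
        omega
      have hkey := prod_key p k r hr2
      have hcross : (N - N') * (p ^ k - 1) = (p ^ k - p ^ (k - r)) * N := by
        have hps : p ^ (k - r) ≤ p ^ k := Nat.pow_le_pow_right (by omega) (by omega)
        have hps1 : 1 ≤ p ^ (k - r) := Nat.one_le_pow _ _ (by omega)
        have e1 : (p ^ k - 1) - (p ^ (k - r) - 1) = p ^ k - p ^ (k - r) := by omega
        rw [Nat.sub_mul, ← hN, ← hN'] at *
        rw [hkey, ← Nat.mul_sub, e1, mul_comm]
      have := div_cross n (N - N') N (p ^ k - p ^ (k - r)) (p ^ k - 1) hN0 hpk1 hcross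
      rw [this]
      congr 1
      rw [mul_assoc]
      congr 1
      rw [Nat.sub_mul, one_mul, ← pow_add, Nat.add_sub_cancel' hr2]
    rw [heq]
    omega
  have hge : N * (n * (N - N') / N + 1) ≤
      ∑ t : { s : Fin r → C // LinearIndependent (ZMod p) s },
        (Finset.univ.filter fun i : Fin n => ¬ ∀ j, φ i (t.1 j) = 0).card := by
    calc N * (n * (N - N') / N + 1)
        = ∑ _t : { s : Fin r → C // LinearIndependent (ZMod p) s },
          (n * (N - N') / N + 1) := by rw [Finset.sum_const, Finset.card_univ, hcardT, smul_eq_mul]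
      _ ≤ _ := Finset.sum_le_sum fun t _ => hlb t
  have hlt := lt_mul_div_succ (n * (N - N')) N hN0
  omega
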